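/- Let f: ℝ^p × ℝ^q → ℝ be differentiable such that u ↦ exp(θ·f(u,w)) and its u-gradient are dominated appropriately, and define F(u) = (1/θ)·log E_{w∼N(0,σ²I)}[exp(θ·f(u,w))]. Then for any u with F(u) < ∞, ∇F(u) = E_{w∼p(·;u)}[∇_u f(u,w)], where p(w;u) = exp(θ·f(u,w) - ‖w‖²/(2σ²) - θ·F(u)) is a probability density. -/

import Mathlib

open MeasureTheory ProbabilityTheory

set_option maxHeartbeats 1000000 in
set_option synthInstance.maxHeartbeats 400000 in
theorem stmt_7 {p q : ℕ} (θ σ : ℝ) (hθ : 0 < θ) (hσ : 0 < σ)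
    (f : EuclideanSpace ℝ (Fin p) → (Fin q → ℝ) → ℝ)
    (g : EuclideanSpace ℝ (Fin p) → (Fin q → ℝ) → EuclideanSpace ℝ (Fin p))
    (μ : Measure (Fin q → ℝ))
    (hμ : μ = Measure.pi fun _ : Fin q => gaussianReal 0 ⟨σ ^ 2, sq_nonneg σ⟩)
    (hf_int : ∀ u, Integrable (fun w => Real.exp (θ * f u w)) μ)
    (hgrad : ∀ w u, HasGradientAt (fun x => f x w) (g u w) u)
    (u : EuclideanSpace ℝ (Fin p)) (ε : ℝ) (hε : 0 < ε)
    (C : (Fin q → ℝ) → ℝ) (hC : Integrable C μ)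
    (hbound : ∀ u' ∈ Metric.ball u ε, ∀ w, ‖Real.exp (θ * f u' w) • g u' w‖ ≤ C w)
    (hmeas : AEStronglyMeasurable (fun w => Real.exp (θ * f u w) • g u w) μ) :
    HasGradientAt (fun u' => (1 / θ) * Real.log (∫ w, Real.exp (θ * f u' w) ∂μ))
      (∫ w, Real.exp (θ * f u w -
          θ * ((1 / θ) * Real.log (∫ w', Real.exp (θ * f u w') ∂μ))) • g u w ∂μ) u := by
  have hμprob : IsProbabilityMeasure μ := by subst hμ; exact @Measure.pi.instIsProbabilityMeasure _ _ _ _ _ (fun _ => instIsProbabilityMeasureGaussianReal _ _)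
  have hμne : NeZero μ := ⟨hμprob.ne_zero⟩
  set td := InnerProductSpace.toDual ℝ (EuclideanSpace ℝ (Fin p)) with htd
  have hsmul : ∀ (c : ℝ) (y : EuclideanSpace ℝ (Fin p)), c • td y = td (c • y) := by
    intro c y
    apply ContinuousLinearMap.ext
    intro v
    simp only [htd, ContinuousLinearMap.smul_apply, InnerProductSpace.toDual_apply_apply,
      real_inner_smul_left, smul_eq_mul]
  set I : EuclideanSpace ℝ (Fin p) → ℝ := fun u' => ∫ w, Real.exp (θ * f u' w) ∂μ with hI
  have hIpos : 0 < I u := integral_exp_pos (hf_int u)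
  -- integrability of the weighted gradient
  have hint : Integrable (fun w => Real.exp (θ * f u w) • g u w) μ :=
    hC.mono' hmeas (Filter.Eventually.of_forall fun w =>
      hbound u (Metric.mem_ball_self hε) w)
  set J : EuclideanSpace ℝ (Fin p) := ∫ w, Real.exp (θ * f u w) • g u w ∂μ with hJ
  -- derivative of the inner integral
  have key : HasFDerivAt I
      (∫ w, θ • td (Real.exp (θ * f u w) • g u w) ∂μ) u := by
    apply hasFDerivAt_integral_of_dominated_of_fderiv_le
      (F' := fun u' w => θ • td (Real.exp (θ * f u' w) • g u' w))
      (bound := fun w => θ * C w) (Metric.ball_mem_nhds u hε)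
    · exact Filter.Eventually.of_forall fun x => (hf_int x).aestronglyMeasurable
    · exact hf_int u
    · exact ((td.toContinuousLinearEquiv.continuous.comp_aestronglyMeasurable
        hmeas).const_smul θ)
    · refine Filter.Eventually.of_forall fun w => fun x hx => ?_
      rw [hsmul, td.norm_map, norm_smul, Real.norm_eq_abs, abs_of_pos hθ]
      exact mul_le_mul_of_nonneg_left (hbound x hx w) hθ.le
    · exact hC.const_mul θ
    · refine Filter.Eventually.of_forall fun w => fun x hx => ?_
      have h1 : HasFDerivAt (fun y => f y w) (td (g x w)) x :=
        (hgrad w x).hasFDerivAt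
      have h2 : HasFDerivAt (fun y => θ * f y w) (θ • td (g x w)) x :=
        h1.const_mul θ
      have h3 := h2.exp
      refine h3.congr_fderiv ?_
      rw [hsmul, hsmul, hsmul, smul_comm]
  have htd_int : Integrable (fun w => td (Real.exp (θ * f u w) • g u w)) μ := by
    refine ⟨td.toContinuousLinearEquiv.continuous.comp_aestronglyMeasurable hint.1, ?_⟩
    have h2 := hint.2
    unfold HasFiniteIntegral at h2 ⊢
    simpa only [td.enorm_map] using h2
  have hswap : (∫ w, td (Real.exp (θ * f u w) • g u w) ∂μ) = td J := by
    apply ContinuousLinearMap.ext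
    intro v
    rw [ContinuousLinearMap.integral_apply htd_int]
    simp only [htd, InnerProductSpace.toDual_apply_apply]
    have h1 : ∀ w : Fin q → ℝ, (inner ℝ (Real.exp (θ * f u w) • g u w) v : ℝ)
        = inner ℝ v (Real.exp (θ * f u w) • g u w) := fun w => real_inner_comm _ _
    simp_rw [h1]
    rw [integral_inner hint v, hJ]
    exact real_inner_comm _ _
  have hDeq : (∫ w, θ • td (Real.exp (θ * f u w) • g u w) ∂μ) = θ • td J := by
    rw [integral_smul, hswap]
  rw [hDeq] at key
  have hlog := (key.log hIpos.ne').const_mul (1 / θ)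
  rw [hasGradientAt_iff_hasFDerivAt]
  have hgr : (∫ w, Real.exp (θ * f u w -
      θ * ((1 / θ) * Real.log (I u))) • g u w ∂μ) = (I u)⁻¹ • J := by
    have hsimp : ∀ w, Real.exp (θ * f u w - θ * ((1 / θ) * Real.log (I u))) • g u w
        = (I u)⁻¹ • (Real.exp (θ * f u w) • g u w) := by
      intro w
      rw [smul_smul]
      congr 1
      have hth : θ * ((1 / θ) * Real.log (I u)) = Real.log (I u) := by
        field_simp
      rw [hth, Real.exp_sub, Real.exp_log hIpos, div_eq_inv_mul]
    simp_rw [hsimp]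
    rw [integral_smul]
  rw [hgr]
  have hc : ((1 / θ : ℝ)) • (I u)⁻¹ • θ • J = (I u)⁻¹ • J := by
    rw [smul_smul, smul_smul]
    congr 1
    field_simp
  have hfinal : (1 / θ : ℝ) • (I u)⁻¹ • θ • td J = td ((I u)⁻¹ • J) := by
    rw [hsmul, hsmul, hsmul, hc]
  rw [← hfinal]
  exact hlog
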